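/- arXiv:1405.3327 — 3 statements merged into one kernel-verified Lean document; each statement's English description precedes it below -/
import Mathlib

section
/- There exists a universal constant C < ∞ such that for every N ∈ ℕ and every x ∈ ℝ^N with ∑_i x_i = 0, denoting by x̄ the associated step function on the torus: (i) (1/C)‖x̄‖²_{H^{-1}} ≤ (1/N)⟨A^{-1}x, x⟩ ≤ C‖x̄‖²_{H^{-1}} (in fact ‖x̄‖²_{H^{-1}} ≤ (1/N)⟨A^{-1}x, x⟩ ≤ 3‖x̄‖²_{H^{-1}}); and (ii) for every C₀ > 0 there is C' depending only on C₀ such that if (1/N)∑_i x_i² ≤ C₀ then |‖x̄‖²_{H^{-1}} − (1/N)⟨A^{-1}x, x⟩| ≤ C'/N. -/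
open MeasureTheory Real intervalIntegral

noncomputable section

/-- The discrete (periodic) operator `A`, `(Ax)ᵢ = N²(-x_{i-1} + 2xᵢ - x_{i+1})`. -/
def Amat (N : ℕ) (x : Fin N → ℝ) : Fin N → ℝ := fun i =>
  (N : ℝ) ^ 2 * (2 * x i - x ⟨(i.val + 1) % N, Nat.mod_lt _ i.pos⟩
    - x ⟨(i.val + (N - 1)) % N, Nat.mod_lt _ i.pos⟩)

/-- The step function on `[0,1)` associated to `x ∈ ℝ^N`: it takes the value `x_j` on the
`j`-th subinterval of length `1/N`. -/
def stepFun (N : ℕ) (x : Fin N → ℝ) (θ : ℝ) : ℝ :=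
  if h : ⌊θ * N⌋₊ < N then x ⟨⌊θ * N⌋₊, h⟩ else 0

/-- The mean-zero primitive `w` of the step function `x̄`:
`w(θ) = ∫₀^θ x̄(s) ds - ∫₀¹ ∫₀^t x̄(s) ds dt`. -/
def wFun (N : ℕ) (x : Fin N → ℝ) (θ : ℝ) : ℝ :=
  (∫ s in (0:ℝ)..θ, stepFun N x s)
    - ∫ t in (0:ℝ)..(1:ℝ), (∫ s in (0:ℝ)..t, stepFun N x s)

/-- The squared `H⁻¹` norm of the step function `x̄` on the torus:
`‖x̄‖²_{H⁻¹} = ∫₀¹ w(θ)² dθ`. -/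
def Hm1sq (N : ℕ) (x : Fin N → ℝ) : ℝ := ∫ θ in (0:ℝ)..(1:ℝ), (wFun N x θ) ^ 2

namespace S14
open Finset


variable {N : ℕ} (x z : Fin N → ℝ)

/-- extension of x to ℕ -/
def X (N : ℕ) (x : Fin N → ℝ) (k : ℕ) : ℝ := if h : k < N then x ⟨k, h⟩ else 0

/-- partial sums / N -/
def u (N : ℕ) (x : Fin N → ℝ) (k : ℕ) : ℝ := (1 / (N:ℝ)) * ∑ i ∈ range k, X N x i

def sFin (N : ℕ) (i : Fin N) : Fin N := ⟨(i.val + 1) % N, Nat.mod_lt _ i.pos⟩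
def pFin (N : ℕ) (i : Fin N) : Fin N := ⟨(i.val + (N - 1)) % N, Nat.mod_lt _ i.pos⟩

lemma p_s (i : Fin N) : pFin N (sFin N i) = i := by
  have hN := i.pos
  apply Fin.ext
  simp only [pFin, sFin]
  rw [Nat.mod_add_mod]
  have : i.val + 1 + (N - 1) = i.val + N := by omega
  rw [this, Nat.add_mod_right, Nat.mod_eq_of_lt i.isLt]

lemma s_p (i : Fin N) : sFin N (pFin N i) = i := by
  have hN := i.pos
  apply Fin.ext
  simp only [pFin, sFin]
  rw [Nat.mod_add_mod]
  have : i.val + (N - 1) + 1 = i.val + N := by omega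
  rw [this, Nat.add_mod_right, Nat.mod_eq_of_lt i.isLt]

lemma s_bij : Function.Bijective (sFin N) :=
  Function.bijective_iff_has_inverse.2 ⟨pFin N, p_s, s_p⟩

lemma p_bij : Function.Bijective (pFin N) :=
  Function.bijective_iff_has_inverse.2 ⟨sFin N, s_p, p_s⟩

lemma sum_comp_s (f : Fin N → ℝ) : ∑ i, f (sFin N i) = ∑ i, f i :=
  Function.Bijective.sum_comp s_bij f

lemma sum_comp_p (f : Fin N → ℝ) : ∑ i, f (pFin N i) = ∑ i, f i :=
  Function.Bijective.sum_comp p_bij f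


/-- L5 -/
lemma sum_zx (hAz : ∀ i, (N:ℝ)^2 * (2 * z i - z (sFin N i) - z (pFin N i)) = x i) :
    ∑ i, z i * x i = (N:ℝ)^2 * ∑ i, (z i - z (pFin N i))^2 := by
  have h1 : ∑ i, z i * z (sFin N i) = ∑ i, z i * z (pFin N i) := by
    have := sum_comp_p (N := N) (fun j => z j * z (sFin N j))
    simp only [s_p] at this
    rw [← this]
    exact Finset.sum_congr rfl fun i _ => mul_comm _ _
  have h2 : ∑ i, (z (pFin N i))^2 = ∑ i, (z i)^2 := sum_comp_p (fun j => (z j)^2)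
  have key : ∑ i, (z i * x i - (N:ℝ)^2 * (z i - z (pFin N i))^2) = 0 := by
    have hc : ∀ i ∈ Finset.univ, z i * x i - (N:ℝ)^2 * (z i - z (pFin N i))^2
        = (N:ℝ)^2 * ((z i)^2 - (z (pFin N i))^2)
          + (N:ℝ)^2 * (z i * z (pFin N i) - z i * z (sFin N i)) := fun i _ => by
      rw [← hAz i]; ring
    rw [Finset.sum_congr rfl hc, Finset.sum_add_distrib, ← Finset.mul_sum, ← Finset.mul_sum,
      Finset.sum_sub_distrib, Finset.sum_sub_distrib, h1, h2]
    ring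
  rw [Finset.mul_sum, ← sub_eq_zero, ← Finset.sum_sub_distrib]
  exact key

lemma X_val (i : Fin N) : X N x i.val = x i := by
  simp [X, i.isLt]

lemma u_zero : u N x 0 = 0 := by simp [u]

lemma u_succ (k : ℕ) : u N x (k+1) = u N x k + (1/(N:ℝ)) * X N x k := by
  simp [u, Finset.sum_range_succ, mul_add]

lemma sum_X (hx : ∑ i, x i = 0) : ∑ k ∈ range N, X N x k = 0 := by
  rw [← Fin.sum_univ_eq_sum_range (X N x) N]
  rw [Finset.sum_congr rfl (fun i _ => X_val x i)]
  exact hx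

lemma u_N (hx : ∑ i, x i = 0) : u N x N = 0 := by
  simp [u, sum_X x hx]

lemma sum_X_sq : ∑ k ∈ range N, (X N x k)^2 = ∑ i, (x i)^2 := by
  rw [← Fin.sum_univ_eq_sum_range (fun k => (X N x k)^2) N]
  exact Finset.sum_congr rfl (fun i _ => by rw [X_val])

lemma u_val (hN : 0 < N)
    (hAz : ∀ i, (N:ℝ)^2 * (2 * z i - z (sFin N i) - z (pFin N i)) = x i)
    (k : ℕ) (hk : k < N) :
    u N x k = (N:ℝ) * (z ⟨0, hN⟩ - z (pFin N ⟨0, hN⟩))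
      - (N:ℝ) * (z ⟨k, hk⟩ - z (pFin N ⟨k, hk⟩)) := by
  have hNR : (N:ℝ) ≠ 0 := Nat.cast_ne_zero.2 hN.ne'
  induction k with
  | zero => simp [u]
  | succ k ih =>
    have hk' : k < N := Nat.lt_of_succ_lt hk
    have hs : sFin N ⟨k, hk'⟩ = ⟨k+1, hk⟩ := by
      apply Fin.ext; simp [sFin, Nat.mod_eq_of_lt hk]
    have hp : pFin N ⟨k+1, hk⟩ = ⟨k, hk'⟩ := by
      apply Fin.ext
      simp only [pFin]
      have : k + 1 + (N - 1) = k + N := by omega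
      rw [this, Nat.add_mod_right, Nat.mod_eq_of_lt hk']
    rw [u_succ, ih hk', show X N x k = x ⟨k, hk'⟩ from X_val x ⟨k, hk'⟩, ← hAz ⟨k, hk'⟩,
      hs, hp]
    field_simp
    ring

lemma sum_u (hN : 0 < N)
    (hAz : ∀ i, (N:ℝ)^2 * (2 * z i - z (sFin N i) - z (pFin N i)) = x i) :
    ∑ k ∈ range N, u N x k = (N:ℝ)^2 * (z ⟨0, hN⟩ - z (pFin N ⟨0, hN⟩)) := by
  set g : ℕ → ℝ := fun k => if h : k < N then z ⟨k, h⟩ - z (pFin N ⟨k, h⟩) else 0 with hg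
  have h0 : ∑ k ∈ range N, g k = 0 := by
    rw [← Fin.sum_univ_eq_sum_range g N]
    have : ∀ i ∈ Finset.univ, g i.val = z i - z (pFin N i) := fun i _ => by
      simp [hg, i.isLt]
    rw [Finset.sum_congr rfl this, Finset.sum_sub_distrib, sum_comp_p]
    ring
  have hc : ∀ k ∈ range N, u N x k
      = (N:ℝ) * (z ⟨0, hN⟩ - z (pFin N ⟨0, hN⟩)) - (N:ℝ) * g k := by
    intro k hk
    have hk' := Finset.mem_range.1 hk
    rw [u_val x z hN hAz k hk']
    simp [hg, hk']
  rw [Finset.sum_congr rfl hc, Finset.sum_sub_distrib, Finset.sum_const, ← Finset.mul_sum, h0,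
    Finset.card_range, nsmul_eq_mul]
  ring

/-- main discrete identity: `∑ z x = ∑ (u k - ū)²` -/
lemma sum_zx_eq_sum_u (hN : 0 < N)
    (hAz : ∀ i, (N:ℝ)^2 * (2 * z i - z (sFin N i) - z (pFin N i)) = x i) :
    ∑ i, z i * x i
      = ∑ k ∈ range N, (u N x k - (1/(N:ℝ)) * ∑ j ∈ range N, u N x j)^2 := by
  have hNR : (N:ℝ) ≠ 0 := Nat.cast_ne_zero.2 hN.ne'
  have hub : (1/(N:ℝ)) * ∑ j ∈ range N, u N x j
      = (N:ℝ) * (z ⟨0, hN⟩ - z (pFin N ⟨0, hN⟩)) := by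
    rw [sum_u x z hN hAz]; field_simp
  rw [sum_zx x z hAz, hub]
  rw [Finset.mul_sum]
  rw [← Fin.sum_univ_eq_sum_range
    (fun k => (u N x k - (N:ℝ) * (z ⟨0, hN⟩ - z (pFin N ⟨0, hN⟩)))^2) N]
  refine Finset.sum_congr rfl fun i _ => ?_
  rw [u_val x z hN hAz i.val i.isLt]
  have : (⟨i.val, i.isLt⟩ : Fin N) = i := rfl
  rw [this]
  ring

/-! ### Analysis part -/


lemma poly_int (A B a b : ℝ) :
    ∫ θ in a..b, (A + B*(θ-a))^2
      = A^2*(b-a) + A*B*(b-a)^2 + B^2*(b-a)^3/3 := by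
  have h : ∀ θ ∈ Set.uIcc a b,
      HasDerivAt (fun t => A^2*t + A*B*(t-a)^2 + B^2*(t-a)^3/3) ((A + B*(θ-a))^2) θ := by
    intro θ _
    have h0 : HasDerivAt (fun t : ℝ => t - a) 1 θ := (hasDerivAt_id θ).sub_const a
    have h1 : HasDerivAt (fun t : ℝ => A^2*t) (A^2) θ := by
      simpa using (hasDerivAt_id θ).const_mul (A^2)
    have h2 : HasDerivAt (fun t : ℝ => A*B*(t-a)^2) (A*B*(2*(θ-a))) θ := by
      simpa using ((h0.pow 2).const_mul (A*B))
    have h3 : HasDerivAt (fun t : ℝ => B^2*(t-a)^3/3) (B^2*(3*(θ-a)^2)/3) θ := by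
      simpa using (((h0.pow 3).const_mul (B^2)).div_const 3)
    have := (h1.add h2).add h3
    refine this.congr_deriv ?_
    ring
  rw [intervalIntegral.integral_eq_sub_of_hasDerivAt h
    ((Continuous.intervalIntegrable (by fun_prop) a b))]
  ring

lemma lin_int (A B a b : ℝ) :
    ∫ θ in a..b, (A + B*(θ-a)) = A*(b-a) + B*(b-a)^2/2 := by
  have h : ∀ θ ∈ Set.uIcc a b,
      HasDerivAt (fun t => A*t + B*(t-a)^2/2) (A + B*(θ-a)) θ := by
    intro θ _
    have h0 : HasDerivAt (fun t : ℝ => t - a) 1 θ := (hasDerivAt_id θ).sub_const a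
    have h1 : HasDerivAt (fun t : ℝ => A*t) A θ := by
      simpa using (hasDerivAt_id θ).const_mul A
    have h2 : HasDerivAt (fun t : ℝ => B*(t-a)^2/2) (B*(2*(θ-a))/2) θ := by
      simpa using ((h0.pow 2).const_mul B).div_const 2
    have := h1.add h2
    refine this.congr_deriv ?_
    ring
  rw [intervalIntegral.integral_eq_sub_of_hasDerivAt h
    ((Continuous.intervalIntegrable (by fun_prop) a b))]
  ring

variable {N : ℕ}

lemma floor_cell (hN : 0 < N) {k : ℕ} (hk : k < N) {s : ℝ}
    (h1 : (k:ℝ)/N < s) (h2 : s < ((k:ℝ)+1)/N) : ⌊s * N⌋₊ = k := by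
  have hNR : (0:ℝ) < N := Nat.cast_pos.2 hN
  have hl : (k:ℝ) < s * N := by
    rw [div_lt_iff₀ hNR] at h1; linarith
  have hr : s * N < (k:ℝ) + 1 := by
    rw [lt_div_iff₀ hNR] at h2; linarith
  rw [Nat.floor_eq_iff (le_trans (Nat.cast_nonneg k) hl.le)]
  exact ⟨hl.le, hr⟩

lemma step_ae (x : Fin N → ℝ) (hN : 0 < N) {k : ℕ} (hk : k < N) {α β : ℝ}
    (hα1 : (k:ℝ)/N ≤ α) (hα2 : α ≤ ((k:ℝ)+1)/N)
    (hβ1 : (k:ℝ)/N ≤ β) (hβ2 : β ≤ ((k:ℝ)+1)/N) :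
    ∀ᵐ s ∂(volume : Measure ℝ), s ∈ Set.uIoc α β → stepFun N x s = X N x k := by
  have hsub : {s : ℝ | ¬ (s ∈ Set.uIoc α β → stepFun N x s = X N x k)}
      ⊆ {((k:ℝ)+1)/N} := by
    intro s hs
    rw [Set.mem_setOf_eq, Classical.not_imp] at hs
    obtain ⟨hmem, hne⟩ := hs
    by_contra hss
    apply hne
    have h1 : (k:ℝ)/N < s := lt_of_le_of_lt (le_min hα1 hβ1) hmem.1
    have h2 : s < ((k:ℝ)+1)/N :=
      lt_of_le_of_ne (le_trans hmem.2 (max_le hα2 hβ2)) (by simpa using hss)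
    have hf := floor_cell hN hk h1 h2
    simp [stepFun, X, hf, hk]
  exact measure_mono_null hsub Real.volume_singleton

lemma ae_restrict_of_uIoc {f g : ℝ → ℝ} {α β : ℝ}
    (h : ∀ᵐ s ∂(volume : Measure ℝ), s ∈ Set.uIoc α β → f s = g s) :
    f =ᵐ[(volume : Measure ℝ).restrict (Set.uIoc α β)] g :=
  (ae_restrict_iff' measurableSet_uIoc).2 h

lemma cell_integrable (x : Fin N → ℝ) (hN : 0 < N) {k : ℕ} (hk : k < N) {α β : ℝ}
    (hα1 : (k:ℝ)/N ≤ α) (hα2 : α ≤ ((k:ℝ)+1)/N)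
    (hβ1 : (k:ℝ)/N ≤ β) (hβ2 : β ≤ ((k:ℝ)+1)/N) :
    IntervalIntegrable (stepFun N x) volume α β :=
  (_root_.intervalIntegrable_const (c := X N x k)).congr_ae
    (ae_restrict_of_uIoc (step_ae x hN hk hα1 hα2 hβ1 hβ2)).symm

lemma cell_integral (x : Fin N → ℝ) (hN : 0 < N) {k : ℕ} (hk : k < N) {α β : ℝ}
    (hα1 : (k:ℝ)/N ≤ α) (hα2 : α ≤ ((k:ℝ)+1)/N)
    (hβ1 : (k:ℝ)/N ≤ β) (hβ2 : β ≤ ((k:ℝ)+1)/N) :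
    ∫ s in α..β, stepFun N x s = X N x k * (β - α) := by
  rw [intervalIntegral.integral_congr_ae (step_ae x hN hk hα1 hα2 hβ1 hβ2)]
  simp [intervalIntegral.integral_const, smul_eq_mul, mul_comm]

lemma grid (x : Fin N → ℝ) (hN : 0 < N) :
    ∀ k, k ≤ N → IntervalIntegrable (stepFun N x) volume 0 ((k:ℝ)/N) ∧
      (∫ s in (0:ℝ)..((k:ℝ)/N), stepFun N x s) = u N x k := by
  have hNR : (0:ℝ) < N := Nat.cast_pos.2 hN
  intro k
  induction k with
  | zero => intro _; simp [u_zero]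
  | succ k ih =>
    intro hk1
    have hk : k < N := hk1
    obtain ⟨ih1, ih2⟩ := ih hk.le
    have hkk : (k:ℝ)/N ≤ ((k:ℝ)+1)/N := by
      exact (div_le_div_iff_of_pos_right hNR).mpr (by linarith)
    have hci := cell_integrable x hN hk (le_refl ((k:ℝ)/N)) hkk hkk (le_refl _)
    have hcast : (((k+1:ℕ)):ℝ)/N = ((k:ℝ)+1)/N := by push_cast; ring
    constructor
    · rw [hcast]; exact ih1.trans hci
    · rw [hcast, ← intervalIntegral.integral_add_adjacent_intervals ih1 hci, ih2,
        cell_integral x hN hk (le_refl ((k:ℝ)/N)) hkk hkk (le_refl _), u_succ]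
      have : ((k:ℝ)+1)/N - (k:ℝ)/N = 1/(N:ℝ) := by field_simp; ring
      rw [this]; ring

lemma F_on_cell (x : Fin N → ℝ) (hN : 0 < N) {k : ℕ} (hk : k < N) {θ : ℝ}
    (h1 : (k:ℝ)/N ≤ θ) (h2 : θ ≤ ((k:ℝ)+1)/N) :
    (∫ s in (0:ℝ)..θ, stepFun N x s) = u N x k + X N x k * (θ - (k:ℝ)/N) := by
  have hNR : (0:ℝ) < N := Nat.cast_pos.2 hN
  have hkk : (k:ℝ)/N ≤ ((k:ℝ)+1)/N := (div_le_div_iff_of_pos_right hNR).mpr (by linarith)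
  obtain ⟨hg1, hg2⟩ := grid x hN k hk.le
  rw [← intervalIntegral.integral_add_adjacent_intervals hg1
    (cell_integrable x hN hk (le_refl _) hkk h1 h2), hg2,
    cell_integral x hN hk (le_refl _) hkk h1 h2]

/-- the mean value `m = ∫₀¹ F` -/
lemma m_val (x : Fin N → ℝ) (hN : 0 < N) (hx : ∑ i, x i = 0) :
    (∫ t in (0:ℝ)..(1:ℝ), (∫ s in (0:ℝ)..t, stepFun N x s))
      = (1/(N:ℝ)) * ∑ k ∈ range N, u N x k := by
  have hNR : (0:ℝ) < N := Nat.cast_pos.2 hN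
  have hNe : (N:ℝ) ≠ 0 := hNR.ne'
  set F : ℝ → ℝ := fun t => ∫ s in (0:ℝ)..t, stepFun N x s with hF
  have hEq : ∀ k, k < N → Set.EqOn F
      (fun θ => u N x k + X N x k * (θ - (k:ℝ)/N))
      (Set.uIcc ((k:ℝ)/N) (((k:ℝ)+1)/N)) := by
    intro k hk θ hθ
    have hkk : (k:ℝ)/N ≤ ((k:ℝ)+1)/N := (div_le_div_iff_of_pos_right hNR).mpr (by linarith)
    rw [Set.uIcc_of_le hkk] at hθ
    exact F_on_cell x hN hk hθ.1 hθ.2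
  have hInt : ∀ k, k < N → IntervalIntegrable F volume ((k:ℝ)/N) (((k:ℝ)+1)/N) := by
    intro k hk
    refine IntervalIntegrable.congr_ae (f := fun θ => u N x k + X N x k * (θ - (k:ℝ)/N))
      (Continuous.intervalIntegrable (by fun_prop) _ _) (ae_restrict_of_uIoc ?_)
    exact Filter.Eventually.of_forall fun s hs =>
      ((hEq k hk) (Set.uIoc_subset_uIcc hs)).symm
  have hcell : ∀ k ∈ range N, (∫ t in ((k:ℝ)/N)..(((k:ℝ)+1)/N), F t)
      = u N x k * (1/(N:ℝ)) + X N x k * (1/(N:ℝ))^2/2 := by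
    intro k hk
    have hk' := Finset.mem_range.1 hk
    rw [intervalIntegral.integral_congr (hEq k hk'), lin_int]
    have : ((k:ℝ)+1)/N - (k:ℝ)/N = 1/(N:ℝ) := by field_simp; ring
    rw [this]
  have hadj : ∀ k < N, IntervalIntegrable F volume ((fun k : ℕ => (k:ℝ)/N) k)
      ((fun k : ℕ => (k:ℝ)/N) (k+1)) := by
    intro k hk
    have : (((k+1:ℕ)):ℝ)/N = ((k:ℝ)+1)/N := by push_cast; ring
    simpa [this] using hInt k hk
  have hsum := intervalIntegral.sum_integral_adjacent_intervals (μ := volume)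
    (f := F) (a := fun k : ℕ => (k:ℝ)/N) hadj
  simp only [Nat.cast_zero, zero_div] at hsum
  have hNN : ((N:ℕ):ℝ)/N = 1 := by field_simp
  rw [hNN] at hsum
  rw [← hsum]
  have : ∀ k ∈ range N, (∫ t in ((fun k : ℕ => (k:ℝ)/N) k)..((fun k : ℕ => (k:ℝ)/N) (k+1)), F t)
      = u N x k * (1/(N:ℝ)) + X N x k * (1/(N:ℝ))^2/2 := by
    intro k hk
    have hc : (((k+1:ℕ)):ℝ)/N = ((k:ℝ)+1)/N := by push_cast; ring
    simp only [hc]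
    exact hcell k hk
  rw [Finset.sum_congr rfl this, Finset.sum_add_distrib, ← Finset.sum_mul]
  have hsX : ∑ k ∈ range N, X N x k * (1/(N:ℝ))^2/2
      = (∑ k ∈ range N, X N x k) * ((1/(N:ℝ))^2/2) := by
    rw [Finset.sum_mul]; exact Finset.sum_congr rfl fun k _ => by ring
  rw [hsX, sum_X x hx]
  ring

lemma Hm1sq_val (x : Fin N → ℝ) (hN : 0 < N) (hx : ∑ i, x i = 0) :
    Hm1sq N x = ∑ k ∈ range N,
      ((u N x k - (1/(N:ℝ)) * ∑ j ∈ range N, u N x j)^2 * (1/(N:ℝ))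
        + (u N x k - (1/(N:ℝ)) * ∑ j ∈ range N, u N x j) * X N x k * (1/(N:ℝ))^2
        + (X N x k)^2 * (1/(N:ℝ))^3/3) := by
  have hNR : (0:ℝ) < N := Nat.cast_pos.2 hN
  set ub : ℝ := (1/(N:ℝ)) * ∑ j ∈ range N, u N x j with hub
  set W : ℝ → ℝ := fun θ => (wFun N x θ)^2 with hW
  have hmv := m_val x hN hx
  have hEq : ∀ k, k < N → Set.EqOn W
      (fun θ => ((u N x k - ub) + X N x k * (θ - (k:ℝ)/N))^2)
      (Set.uIcc ((k:ℝ)/N) (((k:ℝ)+1)/N)) := by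
    intro k hk θ hθ
    have hkk : (k:ℝ)/N ≤ ((k:ℝ)+1)/N := (div_le_div_iff_of_pos_right hNR).mpr (by linarith)
    rw [Set.uIcc_of_le hkk] at hθ
    simp only [hW, wFun, hmv, F_on_cell x hN hk hθ.1 hθ.2]
    ring
  have hadj : ∀ k < N, IntervalIntegrable W volume ((fun k : ℕ => (k:ℝ)/N) k)
      ((fun k : ℕ => (k:ℝ)/N) (k+1)) := by
    intro k hk
    have hc : (((k+1:ℕ)):ℝ)/N = ((k:ℝ)+1)/N := by push_cast; ring
    simp only [hc]
    refine IntervalIntegrable.congr_ae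
      (f := fun θ => ((u N x k - ub) + X N x k * (θ - (k:ℝ)/N))^2)
      (Continuous.intervalIntegrable (by fun_prop) _ _) (ae_restrict_of_uIoc ?_)
    exact Filter.Eventually.of_forall fun s hs =>
      ((hEq k hk) (Set.uIoc_subset_uIcc hs)).symm
  have hsum := intervalIntegral.sum_integral_adjacent_intervals (μ := volume)
    (f := W) (a := fun k : ℕ => (k:ℝ)/N) hadj
  simp only [Nat.cast_zero, zero_div] at hsum
  have hNN : ((N:ℕ):ℝ)/N = 1 := by field_simp
  rw [hNN] at hsum
  have : Hm1sq N x = ∑ k ∈ range N,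
      ∫ t in ((fun k : ℕ => (k:ℝ)/N) k)..((fun k : ℕ => (k:ℝ)/N) (k+1)), W t := by
    rw [hsum]; rfl
  rw [this]
  refine Finset.sum_congr rfl fun k hk => ?_
  have hk' := Finset.mem_range.1 hk
  have hc : (((k+1:ℕ)):ℝ)/N = ((k:ℝ)+1)/N := by push_cast; ring
  simp only [hc]
  rw [intervalIntegral.integral_congr (hEq k hk'), poly_int]
  have hd : ((k:ℝ)+1)/N - (k:ℝ)/N = 1/(N:ℝ) := by field_simp; ring
  rw [hd]

lemma X_eq_diff (x : Fin N → ℝ) (hN : 0 < N) (k : ℕ) :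
    X N x k = (N:ℝ) * (u N x (k+1) - u N x k) := by
  have hNe : (N:ℝ) ≠ 0 := (Nat.cast_pos.2 hN).ne'
  rw [u_succ]; field_simp; ring

lemma sum_uX (x : Fin N → ℝ) (hN : 0 < N) (hx : ∑ i, x i = 0) :
    ∑ k ∈ range N, u N x k * X N x k
      = -(1/(2*(N:ℝ))) * ∑ k ∈ range N, (X N x k)^2 := by
  have hNe : (N:ℝ) ≠ 0 := (Nat.cast_pos.2 hN).ne'
  have step : ∀ k ∈ range N, u N x k * X N x k
      = ((N:ℝ)/2)*((u N x (k+1))^2 - (u N x k)^2) - (1/(2*(N:ℝ)))*(X N x k)^2 := by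
    intro k _
    rw [X_eq_diff x hN k]
    field_simp
    ring
  rw [Finset.sum_congr rfl step, Finset.sum_sub_distrib, ← Finset.mul_sum, ← Finset.mul_sum,
    Finset.sum_range_sub (fun k => (u N x k)^2), u_N x hx, u_zero]
  ring

lemma sum_shift_sq (x : Fin N → ℝ) (hx : ∑ i, x i = 0) (c : ℝ) :
    ∑ k ∈ range N, (u N x (k+1) - c)^2 = ∑ k ∈ range N, (u N x k - c)^2 := by
  have h1 := Finset.sum_range_succ' (fun k => (u N x k - c)^2) N
  have h2 := Finset.sum_range_succ (fun k => (u N x k - c)^2) N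
  rw [h2] at h1
  have := u_N x hx
  have h0 := u_zero (N := N) (x := x)
  rw [this, h0] at h1
  linarith

/-- master identity -/
lemma key_identity (x z : Fin N → ℝ) (hN : 0 < N) (hx : ∑ i, x i = 0)
    (hAz : ∀ i, (N:ℝ)^2 * (2 * z i - z (sFin N i) - z (pFin N i)) = x i) :
    Hm1sq N x = (1/(N:ℝ)) * ∑ i, z i * x i
      - (1/(6*(N:ℝ)^3)) * ∑ i, (x i)^2 := by
  have hNe : (N:ℝ) ≠ 0 := (Nat.cast_pos.2 hN).ne'
  rw [Hm1sq_val x hN hx]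
  set ub : ℝ := (1/(N:ℝ)) * ∑ j ∈ range N, u N x j with hub
  have hsplit : ∀ k ∈ range N,
      ((u N x k - ub)^2 * (1/(N:ℝ))
        + (u N x k - ub) * X N x k * (1/(N:ℝ))^2
        + (X N x k)^2 * (1/(N:ℝ))^3/3)
      = (u N x k - ub)^2 * (1/(N:ℝ))
        + (u N x k * X N x k) * (1/(N:ℝ))^2 - (ub * (1/(N:ℝ))^2) * X N x k
        + (X N x k)^2 * ((1/(N:ℝ))^3/3) := by
    intro k _; ring
  rw [Finset.sum_congr rfl hsplit]
  simp only [Finset.sum_add_distrib, Finset.sum_sub_distrib, ← Finset.sum_mul, ← Finset.mul_sum]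
  rw [sum_X x hx, sum_uX x hN hx, sum_X_sq x, ← sum_zx_eq_sum_u x z hN hAz]
  field_simp
  ring

lemma sum_zx_nonneg (x z : Fin N → ℝ) (hN : 0 < N)
    (hAz : ∀ i, (N:ℝ)^2 * (2 * z i - z (sFin N i) - z (pFin N i)) = x i) :
    0 ≤ ∑ i, z i * x i := by
  rw [sum_zx_eq_sum_u x z hN hAz]
  exact Finset.sum_nonneg fun k _ => sq_nonneg _

lemma sumX_le (x z : Fin N → ℝ) (hN : 0 < N) (hx : ∑ i, x i = 0)
    (hAz : ∀ i, (N:ℝ)^2 * (2 * z i - z (sFin N i) - z (pFin N i)) = x i) :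
    (1/(N:ℝ)^2) * ∑ i, (x i)^2 ≤ 4 * ∑ i, z i * x i := by
  have hNR : (0:ℝ) < N := Nat.cast_pos.2 hN
  set ub : ℝ := (1/(N:ℝ)) * ∑ j ∈ range N, u N x j with hub
  have hshift := sum_shift_sq x hx ub
  have hbound : ∑ k ∈ range N, (X N x k)^2
      ≤ 4*(N:ℝ)^2 * ∑ k ∈ range N, (u N x k - ub)^2 := by
    calc ∑ k ∈ range N, (X N x k)^2
        = ∑ k ∈ range N, ((N:ℝ) * (u N x (k+1) - u N x k))^2 :=
          Finset.sum_congr rfl fun k _ => by rw [X_eq_diff x hN k]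
      _ ≤ ∑ k ∈ range N, (2*(N:ℝ)^2*(u N x (k+1) - ub)^2 + 2*(N:ℝ)^2*(u N x k - ub)^2) := by
          refine Finset.sum_le_sum fun k _ => ?_
          nlinarith [sq_nonneg ((u N x (k+1) - ub) + (u N x k - ub)), sq_nonneg (N:ℝ)]
      _ = 2*(N:ℝ)^2 * ∑ k ∈ range N, (u N x (k+1) - ub)^2
          + 2*(N:ℝ)^2 * ∑ k ∈ range N, (u N x k - ub)^2 := by
          rw [Finset.sum_add_distrib, Finset.mul_sum, Finset.mul_sum]
      _ = 4*(N:ℝ)^2 * ∑ k ∈ range N, (u N x k - ub)^2 := by rw [hshift]; ring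
  rw [← sum_X_sq x, sum_zx_eq_sum_u x z hN hAz, ← hub]
  have h4 : (1/(N:ℝ)^2) * ∑ k ∈ range N, (X N x k)^2
      ≤ (1/(N:ℝ)^2) * (4*(N:ℝ)^2 * ∑ k ∈ range N, (u N x k - ub)^2) :=
    mul_le_mul_of_nonneg_left hbound (by positivity)
  calc (1/(N:ℝ)^2) * ∑ k ∈ range N, (X N x k)^2
      ≤ (1/(N:ℝ)^2) * (4*(N:ℝ)^2 * ∑ k ∈ range N, (u N x k - ub)^2) := h4
    _ = 4 * ∑ k ∈ range N, (u N x k - ub)^2 := by field_simp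

lemma Hm1sq_zero (x : Fin 0 → ℝ) : Hm1sq 0 x = 0 := by
  have hs : stepFun 0 x = fun _ => 0 := funext fun θ => by simp [stepFun]
  simp [Hm1sq, wFun, hs]

end S14

open S14

/-- Comparison of the `H⁻¹` norm of the associated step function with the
discrete `A⁻¹` norm: (i) `‖x̄‖²_{H⁻¹} ≤ (1/N)⟨A⁻¹x,x⟩ ≤ 3‖x̄‖²_{H⁻¹}` (and in particular the
two quantities are comparable with a universal constant `C`); (ii) if `(1/N)∑xᵢ² ≤ C₀`, then
`|‖x̄‖²_{H⁻¹} - (1/N)⟨A⁻¹x,x⟩| ≤ C'/N` with `C'` depending only on `C₀`. `⟨A⁻¹x,x⟩` is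
phrased through any mean-zero preimage `z` of `x` under `A`. -/
theorem statement14 :
    ∃ C : ℝ, 0 < C ∧
      (∀ (N : ℕ) (x z : Fin N → ℝ), (∑ i, x i = 0) → (∑ i, z i = 0) →
        (∀ i, Amat N z i = x i) →
        ((1 / C) * Hm1sq N x ≤ (1 / (N : ℝ)) * ∑ i, z i * x i ∧
          (1 / (N : ℝ)) * ∑ i, z i * x i ≤ C * Hm1sq N x ∧
          Hm1sq N x ≤ (1 / (N : ℝ)) * ∑ i, z i * x i ∧
          (1 / (N : ℝ)) * ∑ i, z i * x i ≤ 3 * Hm1sq N x)) ∧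
      ∀ C₀ : ℝ, 0 < C₀ → ∃ C' : ℝ, 0 < C' ∧
        ∀ (N : ℕ) (x z : Fin N → ℝ), (∑ i, x i = 0) → (∑ i, z i = 0) →
          (∀ i, Amat N z i = x i) →
          ((1 / (N : ℝ)) * ∑ i, (x i) ^ 2 ≤ C₀) →
          |Hm1sq N x - (1 / (N : ℝ)) * ∑ i, z i * x i| ≤ C' / N := by
  refine ⟨3, by norm_num, ?_, ?_⟩
  · intro N x z hx hz hAz
    rcases Nat.eq_zero_or_pos N with h0 | hN
    · subst h0
      simp [Hm1sq_zero]
    · have hAz' : ∀ i, (N:ℝ)^2 * (2 * z i - z (sFin N i) - z (pFin N i)) = x i := fun i => by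
        simpa [Amat, sFin, pFin] using hAz i
      have hNR : (0:ℝ) < N := Nat.cast_pos.2 hN
      set S : ℝ := ∑ i, z i * x i with hS
      set T : ℝ := ∑ i, (x i)^2 with hT
      have hkey : Hm1sq N x = (1/(N:ℝ)) * S - (1/(6*(N:ℝ)^3)) * T :=
        key_identity x z hN hx hAz'
      have hQ0 : 0 ≤ S := sum_zx_nonneg x z hN hAz'
      have hP : (1/(N:ℝ)^2) * T ≤ 4 * S := sumX_le x z hN hx hAz'
      have hT0 : 0 ≤ T := Finset.sum_nonneg fun i _ => sq_nonneg _
      have hQ0' : 0 ≤ (1/(N:ℝ)) * S := by positivity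
      have hT6 : 0 ≤ (1/(6*(N:ℝ)^3)) * T := by positivity
      have h6 : (1/(6*(N:ℝ)^3))*T ≤ (2/3)*((1/(N:ℝ))*S) := by
        have hstep := mul_le_mul_of_nonneg_left hP
          (le_of_lt (show (0:ℝ) < 1/(6*(N:ℝ)) by positivity))
        calc (1/(6*(N:ℝ)^3))*T = (1/(6*(N:ℝ)))*((1/(N:ℝ)^2)*T) := by ring
          _ ≤ (1/(6*(N:ℝ)))*(4*S) := hstep
          _ = (2/3)*((1/(N:ℝ))*S) := by ring
      refine ⟨by rw [hkey]; linarith, by rw [hkey]; linarith, by rw [hkey]; linarith,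
        by rw [hkey]; linarith⟩
  · intro C₀ hC₀
    refine ⟨C₀, hC₀, ?_⟩
    intro N x z hx hz hAz hC
    rcases Nat.eq_zero_or_pos N with h0 | hN
    · subst h0
      simp [Hm1sq_zero]
    · have hAz' : ∀ i, (N:ℝ)^2 * (2 * z i - z (sFin N i) - z (pFin N i)) = x i := fun i => by
        simpa [Amat, sFin, pFin] using hAz i
      have hNR : (0:ℝ) < N := Nat.cast_pos.2 hN
      have hN1 : (1:ℝ) ≤ N := by exact_mod_cast hN
      set S : ℝ := ∑ i, z i * x i with hS
      set T : ℝ := ∑ i, (x i)^2 with hT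
      have hkey : Hm1sq N x = (1/(N:ℝ)) * S - (1/(6*(N:ℝ)^3)) * T :=
        key_identity x z hN hx hAz'
      have hT0 : 0 ≤ T := Finset.sum_nonneg fun i _ => sq_nonneg _
      have heq : Hm1sq N x - (1/(N:ℝ)) * S = -((1/(6*(N:ℝ)^3)) * T) := by linarith
      rw [heq, abs_neg, abs_of_nonneg (by positivity)]
      have h1 : (1/(6*(N:ℝ)^3))*T = (1/(6*(N:ℝ)^2))*((1/(N:ℝ))*T) := by ring
      have h2 : (1/(6*(N:ℝ)^2))*((1/(N:ℝ))*T) ≤ (1/(6*(N:ℝ)^2))*C₀ :=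
        mul_le_mul_of_nonneg_left hC (by positivity)
      have h3 : (1/(6*(N:ℝ)^2))*C₀ ≤ C₀/N := by
        have hd : (1:ℝ)/(6*(N:ℝ)^2) ≤ 1/(N:ℝ) := by
          apply one_div_le_one_div_of_le hNR
          nlinarith
        calc (1/(6*(N:ℝ)^2))*C₀ ≤ (1/(N:ℝ))*C₀ := mul_le_mul_of_nonneg_right hd hC₀.le
          _ = C₀/N := by ring
      linarith
end
end

section
/- Let (Y, ⟨·,·⟩) be a finite-dimensional real inner product space, H̄ : Y → ℝ a convex C¹ function, Ā : Y → Y a symmetric positive-definite linear operator, and T > 0. A C¹ curve η : [0,T] → Y satisfies dη/dt(t) = −Ā∇H̄(η(t)) for all t ∈ [0,T] if and only if for every ξ ∈ Y and every smooth β : [0,T] → [0,∞) with β(0) = β(T) = 0, ∫₀^T H̄(η(t)) β(t) dt ≤ ∫₀^T H̄(η(t) + ξ) β(t) dt − ∫₀^T ⟨ξ, Ā^{-1} η(t)⟩ β'(t) dt. -/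
open MeasureTheory Real
open scoped RealInnerProductSpace

noncomputable section

lemma ibp_aux (a b : ℝ) (u v u' v' : ℝ → ℝ)
    (hu : ∀ t, HasDerivAt u (u' t) t) (hv : ∀ t, HasDerivAt v (v' t) t)
    (hu' : Continuous u') (hv' : Continuous v') (ha : v a = 0) (hb : v b = 0) :
    ∫ t in a..b, u t * v' t = - ∫ t in a..b, u' t * v t := by
  have h := intervalIntegral.integral_mul_deriv_eq_deriv_mul
    (fun x _ => hu x) (fun x _ => hv x)
    (hu'.intervalIntegrable a b) (hv'.intervalIntegrable a b)
  rw [h, ha, hb]; ring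

lemma line_deriv_aux {E : Type*} [NormedAddCommGroup E] [InnerProductSpace ℝ E]
    [FiniteDimensional ℝ E] (H : E → ℝ) (hd : Differentiable ℝ H) (x ξ : E) :
    HasDerivAt (fun s : ℝ => H (x + s • ξ)) ⟪gradient H x, ξ⟫ 0 := by
  have hc : HasDerivAt (fun s : ℝ => x + s • ξ) ξ 0 := by
    simpa using ((hasDerivAt_id (0:ℝ)).smul_const ξ).const_add x
  have hg : HasFDerivAt H (InnerProductSpace.toDual ℝ E (gradient H x)) (x + (0:ℝ) • ξ) := by
    simpa using (hd x).hasGradientAt.hasFDerivAt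
  have h := hg.comp_hasDerivAt (x := (0:ℝ)) hc
  exact h

/-- Gradient inequality for convex differentiable functions. -/
lemma grad_ineq_aux {E : Type*} [NormedAddCommGroup E] [InnerProductSpace ℝ E]
    [FiniteDimensional ℝ E] (H : E → ℝ) (hHconv : ConvexOn ℝ Set.univ H)
    (hd : Differentiable ℝ H) (x ξ : E) :
    H x + ⟪gradient H x, ξ⟫ ≤ H (x + ξ) := by
  have hder := line_deriv_aux H hd x ξ
  have hg : ConvexOn ℝ Set.univ (fun s : ℝ => H (x + s • ξ)) := by
    have hA : ConvexOn ℝ (⇑(AffineMap.lineMap x (x + ξ)) ⁻¹' Set.univ)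
        (H ∘ ⇑(AffineMap.lineMap x (x + ξ))) := hHconv.comp_affineMap _
    have heq : (H ∘ ⇑(AffineMap.lineMap x (x + ξ))) = fun s : ℝ => H (x + s • ξ) := by
      funext s
      have : (AffineMap.lineMap x (x + ξ)) s = x + s • ξ := by
        simp [AffineMap.lineMap_apply_module]; module
      simp [Function.comp, this]
    rw [heq, Set.preimage_univ] at hA
    exact hA
  have hs := hg.le_slope_of_hasDerivWithinAt_Ioi (Set.mem_univ 0) (Set.mem_univ 1)
    one_pos hder.hasDerivWithinAt
  rw [slope_def_field] at hs
  simp at hs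
  have hgf : ⟪gradient H x, ξ⟫ = (fderiv ℝ H x) ξ := by simp
  linarith

/-- Fundamental lemma of the calculus of variations (inequality version). -/
lemma local_nonneg_aux (g : ℝ → ℝ) (hg : Continuous g) (T : ℝ)
    (h : ∀ β : ℝ → ℝ, ContDiff ℝ (⊤ : ℕ∞) β → (∀ t ∈ Set.Icc (0:ℝ) T, 0 ≤ β t) →
      β 0 = 0 → β T = 0 → 0 ≤ ∫ t in (0:ℝ)..T, g t * β t) :
    ∀ t ∈ Set.Ioo (0:ℝ) T, 0 ≤ g t := by
  intro t₀ ht₀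
  by_contra hneg
  push_neg at hneg
  have hU : IsOpen (g ⁻¹' Set.Iio (g t₀ / 2) ∩ Set.Ioo 0 T) :=
    (isOpen_Iio.preimage hg).inter isOpen_Ioo
  have ht₀U : t₀ ∈ g ⁻¹' Set.Iio (g t₀ / 2) ∩ Set.Ioo 0 T :=
    ⟨by simp [Set.mem_preimage]; linarith, ht₀⟩
  obtain ⟨δ, hδpos, hδ⟩ := Metric.isOpen_iff.mp hU t₀ ht₀U
  set f : ContDiffBump t₀ := ⟨δ/2, δ, by linarith, by linarith⟩ with hf
  have hball : ∀ s ∈ Metric.ball t₀ δ, g s < g t₀ / 2 ∧ s ∈ Set.Ioo 0 T := fun s hs => (hδ hs)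
  have hsupp : ∀ s, s ∉ Metric.ball t₀ δ → f s = 0 := by
    intro s hs
    exact f.zero_of_le_dist (by simpa [Metric.mem_ball, not_lt] using hs)
  have hβ0 : f 0 = 0 := by
    refine hsupp 0 fun hmem => ?_
    exact absurd (hball 0 hmem).2.1 (lt_irrefl 0)
  have hβT : f T = 0 := by
    refine hsupp T fun hmem => ?_
    exact absurd (hball T hmem).2.2 (lt_irrefl T)
  have hTpos : (0:ℝ) < T := ht₀.1.trans ht₀.2
  have hint := h f f.contDiff (fun t _ => f.nonneg) hβ0 hβT
  -- upper bound the integral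
  have hptwise : ∀ t ∈ Set.Icc (0:ℝ) T, g t * f t ≤ (g t₀ / 2) * f t := by
    intro t _
    by_cases hmem : t ∈ Metric.ball t₀ δ
    · exact mul_le_mul_of_nonneg_right (hball t hmem).1.le f.nonneg
    · rw [hsupp t hmem]; simp
  have hi1 : IntervalIntegrable (fun t => g t * f t) volume 0 T :=
    (hg.mul f.continuous).intervalIntegrable 0 T
  have hi2 : IntervalIntegrable (fun t => (g t₀ / 2) * f t) volume 0 T :=
    (continuous_const.mul f.continuous).intervalIntegrable 0 T
  have hmono := intervalIntegral.integral_mono_on hTpos.le hi1 hi2 hptwise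
  rw [intervalIntegral.integral_const_mul] at hmono
  -- lower bound on ∫ f
  have hsub : Set.Icc (t₀ - δ/2) (t₀ + δ/2) ⊆ Metric.ball t₀ δ := by
    intro s hs
    rw [Metric.mem_ball, Real.dist_eq, abs_lt]
    constructor <;> [linarith [hs.1]; linarith [hs.2]]
  have ha0 : (0:ℝ) ≤ t₀ - δ/2 := by
    have := (hball (t₀ - δ/2) (hsub ⟨le_refl _, by linarith⟩)).2.1; linarith
  have hbT : t₀ + δ/2 ≤ T := by
    have := (hball (t₀ + δ/2) (hsub ⟨by linarith, le_refl _⟩)).2.2; linarith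
  have hone : ∀ s ∈ Set.uIcc (t₀ - δ/2) (t₀ + δ/2), f s = 1 := by
    intro s hs
    rw [Set.uIcc_of_le (by linarith)] at hs
    have hmem : s ∈ Metric.closedBall t₀ (δ/2) := by
      rw [Metric.mem_closedBall, Real.dist_eq, abs_le]
      exact ⟨by linarith [hs.1], by linarith [hs.2]⟩
    exact f.one_of_mem_closedBall hmem
  have hmid : ∫ s in (t₀ - δ/2)..(t₀ + δ/2), f s = δ := by
    rw [intervalIntegral.integral_congr hone]
    simp
  have hI : ∀ a b : ℝ, IntervalIntegrable (fun s => f s) volume a b :=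
    fun a b => f.continuous.intervalIntegrable a b
  have hsplit : ∫ s in (0:ℝ)..T, f s =
      (∫ s in (0:ℝ)..(t₀ - δ/2), f s) + ((∫ s in (t₀ - δ/2)..(t₀ + δ/2), f s)
        + ∫ s in (t₀ + δ/2)..T, f s) := by
    rw [intervalIntegral.integral_add_adjacent_intervals (hI _ _) (hI _ _),
      intervalIntegral.integral_add_adjacent_intervals (hI _ _) (hI _ _)]
  have h1 : 0 ≤ ∫ s in (0:ℝ)..(t₀ - δ/2), f s :=
    intervalIntegral.integral_nonneg ha0 (fun u _ => f.nonneg)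
  have h2 : 0 ≤ ∫ s in (t₀ + δ/2)..T, f s :=
    intervalIntegral.integral_nonneg hbT (fun u _ => f.nonneg)
  have hIf : δ ≤ ∫ s in (0:ℝ)..T, f s := by rw [hsplit, hmid]; linarith
  have hIfpos : 0 < ∫ s in (0:ℝ)..T, f s := lt_of_lt_of_le hδpos hIf
  have : g t₀ / 2 * ∫ s in (0:ℝ)..T, f s < 0 :=
    mul_neg_of_neg_of_pos (by linarith) hIfpos
  linarith

/-- Weak (inequality) formulation of the gradient flow
`dη/dt = -Ā∇H̄(η)` for a convex `C¹` function `H̄` and a symmetric positive-definite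
operator `Ā` (with inverse `Ā⁻¹`): the ODE holds on `[0,T]` iff for every `ξ` and every
smooth nonnegative `β` vanishing at `0` and `T`,
`∫₀ᵀ H̄(η)β ≤ ∫₀ᵀ H̄(η+ξ)β - ∫₀ᵀ ⟪ξ, Ā⁻¹η⟫ β'`. -/
theorem statement17 {E : Type*} [NormedAddCommGroup E] [InnerProductSpace ℝ E]
    [FiniteDimensional ℝ E]
    (H : E → ℝ) (hHconv : ConvexOn ℝ Set.univ H) (hHC1 : ContDiff ℝ 1 H)
    (Abar Ainv : E →ₗ[ℝ] E)
    (hsym : ∀ x y : E, ⟪Abar x, y⟫ = ⟪x, Abar y⟫)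
    (hpos : ∀ x : E, x ≠ 0 → 0 < ⟪Abar x, x⟫)
    (hinv₁ : ∀ x, Abar (Ainv x) = x) (hinv₂ : ∀ x, Ainv (Abar x) = x)
    (T : ℝ) (hT : 0 < T) (η : ℝ → E) (hη : ContDiff ℝ 1 η) :
    (∀ t ∈ Set.Icc (0 : ℝ) T, deriv η t = -Abar (gradient H (η t))) ↔
      (∀ (ξ : E) (β : ℝ → ℝ), ContDiff ℝ (⊤ : ℕ∞) β →
        (∀ t ∈ Set.Icc (0 : ℝ) T, 0 ≤ β t) → β 0 = 0 → β T = 0 →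
        (∫ t in (0:ℝ)..T, H (η t) * β t) ≤
          (∫ t in (0:ℝ)..T, H (η t + ξ) * β t)
            - ∫ t in (0:ℝ)..T, ⟪ξ, Ainv (η t)⟫ * deriv β t) := by

  have hd : Differentiable ℝ H := hHC1.differentiable one_ne_zero
  have hηc : Continuous η := hη.continuous
  have hη' : Continuous (deriv η) := hη.continuous_deriv le_rfl
  have hηd : ∀ t, HasDerivAt η (deriv η t) t :=
    fun t => (hη.differentiable one_ne_zero t).hasDerivAt
  have hHc : Continuous H := hHC1.continuous
  set A' : E →L[ℝ] E := LinearMap.toContinuousLinearMap Ainv with hA'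
  have hcinner : ∀ ζ : E, Continuous (fun t => ⟪ζ, Ainv (deriv η t)⟫) := by
    intro ζ
    exact ((innerSL ℝ ζ).comp A').continuous.comp hη'
  -- integration by parts
  have key_ibp : ∀ (ξ : E) (β : ℝ → ℝ), ContDiff ℝ (⊤:ℕ∞) β → β 0 = 0 → β T = 0 →
      ∫ t in (0:ℝ)..T, ⟪ξ, Ainv (η t)⟫ * deriv β t
        = - ∫ t in (0:ℝ)..T, ⟪ξ, Ainv (deriv η t)⟫ * β t := by
    intro ξ β hβ hβ0 hβT
    have hu : ∀ t, HasDerivAt (fun t => ⟪ξ, Ainv (η t)⟫) ⟪ξ, Ainv (deriv η t)⟫ t := by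
      intro t
      exact ((innerSL ℝ ξ).comp A').hasFDerivAt.comp_hasDerivAt t (hηd t)
    have hle : (1 : ℕ∞) ≤ (⊤ : ℕ∞) := le_top
    have hv : ∀ t, HasDerivAt β (deriv β t) t :=
      fun t => (hβ.differentiable (by simp) t).hasDerivAt
    exact ibp_aux 0 T _ β _ _ hu hv (hcinner ξ)
      (hβ.continuous_deriv (by exact_mod_cast hle)) hβ0 hβT
  constructor
  · -- forward direction
    intro hODE ξ β hβ hβpos hβ0 hβT
    have hβc : Continuous β := hβ.continuous
    have hi1 : IntervalIntegrable (fun t => H (η t) * β t) volume 0 T :=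
      ((hHc.comp hηc).mul hβc).intervalIntegrable 0 T
    have hi2 : IntervalIntegrable (fun t => H (η t + ξ) * β t) volume 0 T :=
      ((hHc.comp (hηc.add continuous_const)).mul hβc).intervalIntegrable 0 T
    have hi3 : IntervalIntegrable (fun t => ⟪ξ, Ainv (deriv η t)⟫ * β t) volume 0 T :=
      ((hcinner ξ).mul hβc).intervalIntegrable 0 T
    rw [key_ibp ξ β hβ hβ0 hβT, sub_neg_eq_add, ← intervalIntegral.integral_add hi2 hi3]
    apply intervalIntegral.integral_mono_on hT.le hi1 (hi2.add hi3)
    intro t ht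
    have hc : ⟪ξ, Ainv (deriv η t)⟫ = - ⟪gradient H (η t), ξ⟫ := by
      rw [hODE t ht, map_neg, hinv₂, inner_neg_right, real_inner_comm]
    have hgi := grad_ineq_aux H hHconv hd (η t) ξ
    have hb := hβpos t ht
    have := mul_le_mul_of_nonneg_right
      (show H (η t) ≤ H (η t + ξ) + ⟪ξ, Ainv (deriv η t)⟫ by rw [hc]; linarith) hb
    linarith [this, (add_mul (H (η t + ξ)) ⟪ξ, Ainv (deriv η t)⟫ (β t))]
  · -- backward direction
    intro hweak
    have hGc : ∀ ζ : E, Continuous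
        (fun t => H (η t + ζ) - H (η t) + ⟪ζ, Ainv (deriv η t)⟫) := by
      intro ζ
      exact ((hHc.comp (hηc.add continuous_const)).sub (hHc.comp hηc)).add (hcinner ζ)
    have hpoint : ∀ ζ : E, ∀ t ∈ Set.Icc (0:ℝ) T,
        0 ≤ H (η t + ζ) - H (η t) + ⟪ζ, Ainv (deriv η t)⟫ := by
      intro ζ
      have hIoo := local_nonneg_aux _ (hGc ζ) T ?_
      · have hclosed : IsClosed {t : ℝ | 0 ≤ H (η t + ζ) - H (η t) + ⟪ζ, Ainv (deriv η t)⟫} :=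
          isClosed_le continuous_const (hGc ζ)
        intro t ht
        have hsubset := hclosed.closure_subset_iff.mpr (fun s hs => hIoo s hs)
        apply hsubset
        rw [closure_Ioo hT.ne]
        exact ht
      · intro β hβ hβpos hβ0 hβT
        have hβc : Continuous β := hβ.continuous
        have hi1 : IntervalIntegrable (fun t => H (η t) * β t) volume 0 T :=
          ((hHc.comp hηc).mul hβc).intervalIntegrable 0 T
        have hi2 : IntervalIntegrable (fun t => H (η t + ζ) * β t) volume 0 T :=
          ((hHc.comp (hηc.add continuous_const)).mul hβc).intervalIntegrable 0 T
        have hi3 : IntervalIntegrable (fun t => ⟪ζ, Ainv (deriv η t)⟫ * β t) volume 0 T :=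
          ((hcinner ζ).mul hβc).intervalIntegrable 0 T
        have hw := hweak ζ β hβ hβpos hβ0 hβT
        rw [key_ibp ζ β hβ hβ0 hβT, sub_neg_eq_add] at hw
        have hexp : ∫ t in (0:ℝ)..T,
            (H (η t + ζ) - H (η t) + ⟪ζ, Ainv (deriv η t)⟫) * β t
            = ((∫ t in (0:ℝ)..T, H (η t + ζ) * β t)
              + ∫ t in (0:ℝ)..T, ⟪ζ, Ainv (deriv η t)⟫ * β t)
              - ∫ t in (0:ℝ)..T, H (η t) * β t := by
          rw [← intervalIntegral.integral_add hi2 hi3,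
            ← intervalIntegral.integral_sub (hi2.add hi3) hi1]
          apply intervalIntegral.integral_congr
          intro t _
          ring
        rw [hexp]
        linarith
    intro t ht
    have key : ∀ ξ' : E, 0 ≤ ⟪gradient H (η t), ξ'⟫ + ⟪ξ', Ainv (deriv η t)⟫ := by
      intro ξ'
      have hφ := line_deriv_aux H hd (η t) ξ'
      have htend : Filter.Tendsto (slope (fun s : ℝ => H (η t + s • ξ')) 0)
          (nhdsWithin 0 (Set.Ioi 0)) (nhds ⟪gradient H (η t), ξ'⟫) :=
        (hasDerivAt_iff_tendsto_slope.mp hφ).mono_left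
          (nhdsWithin_mono 0 (fun s hs => ne_of_gt hs))
      have hev : ∀ᶠ s in nhdsWithin (0:ℝ) (Set.Ioi 0),
          -⟪ξ', Ainv (deriv η t)⟫ ≤ slope (fun s : ℝ => H (η t + s • ξ')) 0 s := by
        refine Filter.eventually_of_mem self_mem_nhdsWithin (fun s hs => ?_)
        have hs0 : (0:ℝ) < s := hs
        have hp := hpoint (s • ξ') t ht
        rw [real_inner_smul_left] at hp
        rw [slope_def_field]
        simp only [zero_smul, add_zero, sub_zero]
        rw [le_div_iff₀ hs0]
        nlinarith
      have := ge_of_tendsto htend hev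
      linarith
    have hkey2 : ∀ ξ' : E, ⟪gradient H (η t), ξ'⟫ + ⟪ξ', Ainv (deriv η t)⟫ = 0 := by
      intro ξ'
      have h1 := key ξ'
      have h2 := key (-ξ')
      rw [inner_neg_right, inner_neg_left] at h2
      linarith
    have hall : gradient H (η t) + Ainv (deriv η t) = 0 := by
      have h4 : ⟪gradient H (η t) + Ainv (deriv η t),
          gradient H (η t) + Ainv (deriv η t)⟫ = 0 := by
        rw [inner_add_left]
        have h := hkey2 (gradient H (η t) + Ainv (deriv η t))
        have hc := real_inner_comm (Ainv (deriv η t)) (gradient H (η t) + Ainv (deriv η t))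
        linarith [h, hc]
      exact inner_self_eq_zero.mp h4
    have hAinv : Ainv (deriv η t) = -(gradient H (η t)) :=
      eq_neg_of_add_eq_zero_right hall
    calc deriv η t = Abar (Ainv (deriv η t)) := (hinv₁ _).symm
      _ = -Abar (gradient H (η t)) := by rw [hAinv, map_neg]
end
end

section
/- For every C₀ > 0 and every δ > 0 there exists λ < 1 such that every Borel probability measure ν on ℝ satisfying ∫ |x| ν(dx) ≤ C₀ and |∫ e^{ixξ} ν(dx)| ≤ C₀/|ξ| for all ξ ≠ 0 also satisfies |∫ e^{ixξ} ν(dx)| ≤ λ for all ξ with |ξ| ≥ δ. -/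
open MeasureTheory ENNReal Real

noncomputable section

lemma exp_int (ν : Measure ℝ) [IsProbabilityMeasure ν] (a : ℝ) :
    Integrable (fun x : ℝ => Complex.exp (Complex.I * x * a)) ν := by
  apply Integrable.mono' (integrable_const (1:ℝ))
  · exact (Continuous.cexp (by continuity)).aestronglyMeasurable
  · refine ae_of_all _ fun x => ?_
    simp [Complex.norm_exp]

lemma cos_int (ν : Measure ℝ) [IsProbabilityMeasure ν] (a θ : ℝ) :
    Integrable (fun x : ℝ => Real.cos (x * a - θ)) ν := by
  apply Integrable.mono' (integrable_const (1:ℝ))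
  · exact (Real.continuous_cos.comp (by continuity)).aestronglyMeasurable
  · refine ae_of_all _ fun x => ?_
    simpa using Real.abs_cos_le_one (x * a - θ)

lemma char_re (ν : Measure ℝ) [IsProbabilityMeasure ν] (a θ : ℝ) :
    (Complex.exp (-(θ:ℂ) * Complex.I) * ∫ x : ℝ, Complex.exp (Complex.I * x * a) ∂ν).re
      = ∫ x : ℝ, Real.cos (x * a - θ) ∂ν := by
  rw [← integral_const_mul]
  simp only [← RCLike.re_to_complex]
  rw [← integral_re ((exp_int ν a).const_mul _)]
  refine integral_congr_ae (ae_of_all _ fun x => ?_)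
  simp only [RCLike.re_to_complex]
  rw [← Complex.exp_add,
    show -(θ:ℂ) * Complex.I + Complex.I * x * a = ((x * a - θ : ℝ) : ℂ) * Complex.I by
      push_cast; ring,
    Complex.exp_ofReal_mul_I_re]

lemma char_double (ν : Measure ℝ) [IsProbabilityMeasure ν] (η : ℝ) :
    1 - ‖∫ x : ℝ, Complex.exp (Complex.I * x * ((2 * η : ℝ) : ℂ)) ∂ν‖ ≤
      4 * (1 - ‖∫ x : ℝ, Complex.exp (Complex.I * x * (η : ℂ)) ∂ν‖) := by
  set z := ∫ x : ℝ, Complex.exp (Complex.I * x * (η : ℂ)) ∂ν with hzdef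
  set z2 := ∫ x : ℝ, Complex.exp (Complex.I * x * ((2 * η : ℝ) : ℂ)) ∂ν with hz2def
  set θ := z.arg with hθ
  have hz : Complex.exp (-(θ:ℂ) * Complex.I) * z = (‖z‖ : ℂ) := by
    conv_lhs => rw [← Complex.norm_mul_exp_arg_mul_I z]
    rw [mul_comm, mul_assoc, ← Complex.exp_add]
    simp [hθ]
  have h1 : ‖z‖ = ∫ x : ℝ, Real.cos (x * η - θ) ∂ν := by
    have := char_re ν η θ
    rw [← hzdef, hz] at this
    simpa using this
  have h2 : (Complex.exp (-((2*θ : ℝ):ℂ) * Complex.I) * z2).re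
      = ∫ x : ℝ, Real.cos (2 * (x * η - θ)) ∂ν := by
    have := char_re ν (2*η) (2*θ)
    rw [← hz2def] at this
    rw [this]
    refine integral_congr_ae (ae_of_all _ fun x => ?_)
    show Real.cos (x * (2*η) - 2*θ) = Real.cos (2 * (x * η - θ))
    rw [show x * (2*η) - 2*θ = 2 * (x * η - θ) by ring]
  have h3 : (Complex.exp (-((2*θ : ℝ):ℂ) * Complex.I) * z2).re ≤ ‖z2‖ := by
    calc (Complex.exp (-((2*θ : ℝ):ℂ) * Complex.I) * z2).re
        ≤ ‖Complex.exp (-((2*θ : ℝ):ℂ) * Complex.I) * z2‖ := Complex.re_le_norm _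
      _ = ‖z2‖ := by
          rw [norm_mul]
          simp [Complex.norm_exp]
  have hone : ∫ _ : ℝ, (1:ℝ) ∂ν = 1 := by simp
  have hmono : ∫ x : ℝ, (1 - Real.cos (2 * (x * η - θ))) ∂ν
      ≤ ∫ x : ℝ, 4 * (1 - Real.cos (x * η - θ)) ∂ν := by
    refine integral_mono ((integrable_const (1:ℝ)).sub ?_) (((integrable_const (1:ℝ)).sub
      (cos_int ν η θ)).const_mul 4) fun x => ?_
    · have := cos_int ν (2*η) (2*θ)
      refine this.congr (ae_of_all _ fun x => ?_)
      show Real.cos (x * (2*η) - 2*θ) = Real.cos (2 * (x * η - θ))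
      rw [show x * (2*η) - 2*θ = 2 * (x * η - θ) by ring]
    · nlinarith [Real.cos_two_mul (x * η - θ), sq_nonneg (Real.cos (x * η - θ) - 1)]
  have e1 : ∫ x : ℝ, (1 - Real.cos (2 * (x * η - θ))) ∂ν
      = 1 - ∫ x : ℝ, Real.cos (2 * (x * η - θ)) ∂ν := by
    rw [integral_sub (integrable_const 1) ?_, hone]
    have := cos_int ν (2*η) (2*θ)
    refine this.congr (ae_of_all _ fun x => ?_)
    show Real.cos (x * (2*η) - 2*θ) = Real.cos (2 * (x * η - θ))
    rw [show x * (2*η) - 2*θ = 2 * (x * η - θ) by ring]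
  have e2 : ∫ x : ℝ, 4 * (1 - Real.cos (x * η - θ)) ∂ν
      = 4 * (1 - ∫ x : ℝ, Real.cos (x * η - θ) ∂ν) := by
    rw [integral_const_mul, integral_sub (integrable_const 1) (cos_int ν η θ), hone]
  rw [e1, e2] at hmono
  have h4 : ∫ x : ℝ, Real.cos (2 * (x * η - θ)) ∂ν ≤ ‖z2‖ := by rw [← h2]; exact h3
  rw [← h1] at hmono
  linarith

/-- Uniform decay of characteristic functions away from the origin: for
every `C₀ > 0` and `δ > 0` there is `λ < 1` such that every probability measure `ν` on `ℝ`
with `∫|x| dν ≤ C₀` and `|ν̂(ξ)| ≤ C₀/|ξ|` for all `ξ ≠ 0` satisfies `|ν̂(ξ)| ≤ λ` for all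
`|ξ| ≥ δ`. -/
theorem statement18 (C₀ δ : ℝ) (hC₀ : 0 < C₀) (hδ : 0 < δ) :
    ∃ lam : ℝ, lam < 1 ∧
      ∀ ν : Measure ℝ, IsProbabilityMeasure ν →
        (∫⁻ x, ENNReal.ofReal |x| ∂ν) ≤ ENNReal.ofReal C₀ →
        (∀ ξ : ℝ, ξ ≠ 0 →
          ‖∫ x, Complex.exp (Complex.I * x * ξ) ∂ν‖ ≤ C₀ / |ξ|) →
        ∀ ξ : ℝ, δ ≤ |ξ| →
          ‖∫ x, Complex.exp (Complex.I * x * ξ) ∂ν‖ ≤ lam := by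
  obtain ⟨n, hn⟩ := pow_unbounded_of_one_lt (2 * C₀ / δ) (one_lt_two (α := ℝ))
  have h4pos : (0:ℝ) < 4 ^ n := by positivity
  have hlam : (0:ℝ) < 1 / (2 * 4 ^ n) := by positivity
  refine ⟨1 - 1 / (2 * 4 ^ n), by linarith, ?_⟩
  intro ν hν _ hdecay ξ hξ
  have hξ0 : ξ ≠ 0 := by
    intro h; rw [h] at hξ; simp at hξ; linarith
  have key : ∀ m : ℕ, 1 - ‖∫ x, Complex.exp (Complex.I * x * ((2:ℝ)^m * ξ : ℝ)) ∂ν‖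
      ≤ 4 ^ m * (1 - ‖∫ x, Complex.exp (Complex.I * x * (ξ:ℂ)) ∂ν‖) := by
    intro m
    induction m with
    | zero => simp
    | succ m ih =>
        have h2 : ((2:ℝ)^(m+1) * ξ : ℝ) = 2 * ((2:ℝ)^m * ξ) := by ring
        rw [h2]
        calc 1 - ‖∫ x, Complex.exp (Complex.I * x * ((2 * ((2:ℝ)^m * ξ) : ℝ) : ℂ)) ∂ν‖
            ≤ 4 * (1 - ‖∫ x, Complex.exp (Complex.I * x * (((2:ℝ)^m * ξ : ℝ) : ℂ)) ∂ν‖) :=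
              char_double ν ((2:ℝ)^m * ξ)
          _ ≤ 4 ^ (m+1) * (1 - ‖∫ x, Complex.exp (Complex.I * x * (ξ:ℂ)) ∂ν‖) := by
              rw [pow_succ, mul_comm ((4:ℝ)^m) 4, mul_assoc]
              linarith
  have hnz : ((2:ℝ)^n * ξ) ≠ 0 := mul_ne_zero (by positivity) hξ0
  have hdec := hdecay _ hnz
  have habs : |(2:ℝ)^n * ξ| = 2 ^ n * |ξ| := by
    rw [abs_mul, abs_pow, abs_two]
  have hle : C₀ / |(2:ℝ)^n * ξ| ≤ C₀ / ((2:ℝ)^n * δ) := by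
    rw [habs]
    gcongr
  have h2nδ : 2 * C₀ < (2:ℝ)^n * δ := by
    have := (div_lt_iff₀ hδ).mp hn
    linarith
  have hhalf : C₀ / ((2:ℝ)^n * δ) < 1/2 := by
    rw [div_lt_iff₀ (by positivity)]
    linarith
  have hsmall : ‖∫ x, Complex.exp (Complex.I * x * (((2:ℝ)^n * ξ : ℝ) : ℂ)) ∂ν‖ < 1/2 :=
    lt_of_le_of_lt (hdec.trans hle) hhalf
  have hk := key n
  have hid : (4:ℝ)^n * (1/(2*4^n)) = 1/2 := by field_simp
  nlinarith [hk, hsmall, hid, h4pos]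
end
end
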